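/- Let P and C be finite sets, let c : P × C → ℝ be an arbitrary cost function, and let μ : C → ℕ be target fiber sizes with ∑_{x∈C} μ_x = |P|, where at least one assignment with fiber sizes μ exists. An assignment f : P → C with fiber sizes μ minimizes ∑_{y∈P} c(y, f(y)) among all assignments with fiber sizes μ if and only if there exist weights w : C → ℝ such that for every y ∈ P and every x ∈ C, c(y, f(y)) − w_{f(y)} ≤ c(y, x) − w_x. -/

import Mathlib

open Finset

namespace Stmt2Aux

variable {C : Type*}

/-- Weight of a path (list of vertices) given edge weights `a`. -/
def pw (a : C → C → ℝ) : List C → ℝ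
  | [] => 0
  | [_] => 0
  | u :: v :: t => a u v + pw a (v :: t)

lemma pw_nil (a : C → C → ℝ) : pw a [] = 0 := rfl
lemma pw_single (a : C → C → ℝ) (u : C) : pw a [u] = 0 := rfl
lemma pw_cons_cons (a : C → C → ℝ) (u v : C) (t : List C) :
    pw a (u :: v :: t) = a u v + pw a (v :: t) := rfl

lemma pw_zip (a : C → C → ℝ) : ∀ l : List C,
    pw a l = ((l.zip l.tail).map fun p => a p.1 p.2).sum
  | [] => rfl
  | [_] => rfl
  | u :: v :: t => by
    rw [pw_cons_cons, pw_zip a (v :: t)]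
    simp

lemma pw_append_last (a : C → C → ℝ) : ∀ (l : List C) (hl : l ≠ []) (v : C),
    pw a (l ++ [v]) = pw a l + a (l.getLast hl) v
  | [], hl, v => absurd rfl hl
  | [u], _, v => by simp [pw_single, pw_cons_cons, pw_nil]
  | u :: x :: t, _, v => by
    have ih := pw_append_last a (x :: t) (List.cons_ne_nil _ _) v
    simp only [List.cons_append] at ih ⊢
    rw [pw_cons_cons, pw_cons_cons, ih, List.getLast_cons (List.cons_ne_nil _ _)]
    ring

lemma pw_split (a : C → C → ℝ) : ∀ (s : List C) (u : C) (t : List C),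
    pw a (s ++ u :: t) = pw a (s ++ [u]) + pw a (u :: t)
  | [], u, t => by simp [pw_single]
  | [x], u, t => by simp [pw_cons_cons, pw_single]
  | x :: y :: s, u, t => by
    have ih := pw_split a (y :: s) u t
    simp only [List.cons_append] at ih ⊢
    rw [pw_cons_cons, pw_cons_cons, ih]
    ring

lemma pw_lb (a : C → C → ℝ) (A : ℝ) (hA : ∀ u v, -A ≤ a u v) (hA0 : 0 ≤ A) :
    ∀ l : List C, -((l.length : ℝ) * A) ≤ pw a l
  | [] => by simp [pw_nil]
  | [u] => by simp [pw_single]; positivity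
  | u :: v :: t => by
    have ih := pw_lb a A hA hA0 (v :: t)
    have h := hA u v
    rw [pw_cons_cons]
    simp only [List.length_cons] at ih ⊢
    push_cast at ih ⊢
    linarith

lemma pw_cons (a : C → C → ℝ) (u : C) (m : List C) (hm : m ≠ []) :
    pw a (u :: m) = a u (m.head hm) + pw a m := by
  cases m with
  | nil => exact absurd rfl hm
  | cons x t => rfl

lemma pw_big (a : C → C → ℝ) (A B : ℝ) (S : C → Prop)
    (hA : ∀ u v, -A ≤ a u v) (hA0 : 0 ≤ A)
    (hB : ∀ u v, ¬ S u → a u v = B) :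
    ∀ (l : List C) (z : C), (∃ u ∈ l, ¬ S u) → B - (l.length : ℝ) * A ≤ pw a (l ++ [z])
  | [], z, h => by simp at h
  | u :: t, z, h => by
    have hcons : pw a ((u :: t) ++ [z]) = a u ((t ++ [z]).head (by simp)) + pw a (t ++ [z]) := by
      rw [List.cons_append]; exact pw_cons a u (t ++ [z]) (by simp)
    by_cases hSu : S u
    · obtain ⟨u', hu', hSu'⟩ := h
      have hu't : u' ∈ t := by
        rcases List.mem_cons.mp hu' with rfl | h'
        · exact absurd hSu hSu'
        · exact h'
      have ih := pw_big a A B S hA hA0 hB t z ⟨u', hu't, hSu'⟩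
      have h1 := hA u ((t ++ [z]).head (by simp))
      rw [hcons]
      simp only [List.length_cons]
      push_cast
      linarith
    · have hlb := pw_lb a A hA hA0 (t ++ [z])
      have hBe := hB u ((t ++ [z]).head (by simp)) hSu
      rw [hcons, hBe]
      simp only [List.length_cons, List.length_append, List.length_cons,
        List.length_nil] at hlb ⊢
      push_cast at hlb ⊢
      linarith

end Stmt2Aux


open Stmt2Aux in
theorem stmt_2 {P C : Type*} [Fintype P] [Fintype C] [DecidableEq C]
    (c : P → C → ℝ) (μ : C → ℕ) (hμ : ∑ x, μ x = Fintype.card P)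
    (hex : ∃ f₀ : P → C, ∀ x, (Finset.univ.filter fun y => f₀ y = x).card = μ x)
    (f : P → C) (hf : ∀ x, (Finset.univ.filter fun y => f y = x).card = μ x) :
    (∀ g : P → C, (∀ x, (Finset.univ.filter fun y => g y = x).card = μ x) →
        ∑ y, c y (f y) ≤ ∑ y, c y (g y)) ↔
      ∃ w : C → ℝ, ∀ y x, c y (f y) - w (f y) ≤ c y x - w x := by
  classical
  constructor
  · intro hopt
    rcases isEmpty_or_nonempty P with hP | hP
    · exact ⟨fun _ => 0, fun y => (hP.false y).elim⟩
    set n := Fintype.card C with hn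
    set fiber : C → Finset P := fun x => univ.filter fun y => f y = x with hfiber
    have hmemfiber : ∀ y : P, y ∈ fiber (f y) := fun y => by simp [hfiber]
    set a₀ : C → C → ℝ := fun u v =>
      if h : (fiber u).Nonempty then (fiber u).inf' h (fun y => c y v - c y u) else 0 with ha₀
    set A : ℝ := ∑ u : C, ∑ v : C, |a₀ u v| with hA
    have hA0 : 0 ≤ A := Finset.sum_nonneg fun _ _ => Finset.sum_nonneg fun _ _ => abs_nonneg _
    have habs : ∀ u v, |a₀ u v| ≤ A := by
      intro u v
      calc |a₀ u v| ≤ ∑ v : C, |a₀ u v| :=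
            Finset.single_le_sum (f := fun v => |a₀ u v|) (fun _ _ => abs_nonneg _) (mem_univ v)
        _ ≤ A := Finset.single_le_sum (f := fun u => ∑ v : C, |a₀ u v|)
            (fun _ _ => Finset.sum_nonneg fun _ _ => abs_nonneg _) (mem_univ u)
    set B : ℝ := n * A + 1 with hB
    set a : C → C → ℝ := fun u v => if (fiber u).Nonempty then a₀ u v else B with ha
    have hlb : ∀ u v, -A ≤ a u v := by
      intro u v
      by_cases h : (fiber u).Nonempty
      · have h1 := habs u v
        have h2 := neg_abs_le (a₀ u v)
        simp only [ha, if_pos h]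
        linarith
      · simp only [ha, if_neg h, hB]
        have : (0:ℝ) ≤ (n : ℝ) * A := by positivity
        linarith
    have hedge : ∀ (y : P) (v : C), a (f y) v ≤ c y v - c y (f y) := by
      intro y v
      have hne : (fiber (f y)).Nonempty := ⟨y, hmemfiber y⟩
      simp only [ha, if_pos hne, ha₀, dif_pos hne]
      exact Finset.inf'_le _ (hmemfiber y)
    have hcyc : ∀ (l : List C) (hl : l ≠ []), l.Nodup → 0 ≤ pw a (l ++ [l.head hl]) := by
      intro l hl hnd
      by_cases hall : ∀ u ∈ l, (fiber u).Nonempty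
      · -- cyclic exchange argument
        set k := l.length with hk
        have hkpos : 0 < k := List.length_pos_iff.mpr hl
        set zp := l.zip (l.rotate 1) with hzp
        have hlenrot : (l.rotate 1).length = k := by simp [hk]
        have hzplen : zp.length = k := by
          simp [hzp, hlenrot, hk]
        have hzpfst : ∀ (i : ℕ) (hi : i < k), (zp[i]'(by omega)).1 = l[i]'(by omega) := by
          intro i hi
          simp [hzp, List.getElem_zip]
        have hzpsnd : ∀ (i : ℕ) (hi : i < k),
            (zp[i]'(by omega)).2 = l[(i+1) % k]'(by exact Nat.mod_lt _ hkpos) := by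
          intro i hi
          simp only [hzp, List.getElem_zip, List.getElem_rotate]
          rfl
        set Y : C × C → P := fun p =>
          if h : (fiber p.1).Nonempty then
            (Finset.exists_mem_eq_inf' h (fun y => c y p.2 - c y p.1)).choose
          else Classical.choice hP with hY
        have hYspec : ∀ p : C × C, (fiber p.1).Nonempty →
            f (Y p) = p.1 ∧ a p.1 p.2 = c (Y p) p.2 - c (Y p) p.1 := by
          intro p hne
          have hch := (Finset.exists_mem_eq_inf' hne (fun y => c y p.2 - c y p.1)).choose_spec
          have hYp : Y p = (Finset.exists_mem_eq_inf' hne (fun y => c y p.2 - c y p.1)).choose := by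
            simp only [hY, dif_pos hne]
          constructor
          · rw [hYp]; exact (Finset.mem_filter.mp hch.1).2
          · rw [hYp, ha]
            simp only [if_pos hne, ha₀, dif_pos hne]
            exact hch.2
        have hmemzp : ∀ p ∈ zp, p.1 ∈ l := fun p hp => (List.of_mem_zip hp).1
        have hfst : zp.map Prod.fst = l := by
          apply List.map_fst_zip
          simp [hlenrot, hk]
        have hmapnd : (zp.map Prod.fst).Nodup := by rw [hfst]; exact hnd
        have hzpnd : zp.Nodup := List.Nodup.of_map Prod.fst hmapnd
        have hinj := List.inj_on_of_nodup_map (f := Prod.fst) (l := zp) hmapnd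
        have hfY : ∀ p ∈ zp, f (Y p) = p.1 := fun p hp => (hYspec p (hall _ (hmemzp p hp))).1
        set ys := zp.map Y with hys
        have hyslen : ys.length = k := by simp [hys, hzplen]
        have hysnd : ys.Nodup := by
          refine List.Nodup.map_on ?_ hzpnd
          intro p hp q hq hYeq
          exact hinj hp hq (by rw [← hfY p hp, ← hfY q hq, hYeq])
        set σ := ys.formPerm with hσ
        have hσ_not : ∀ y, y ∉ ys → σ y = y := fun y hy => List.formPerm_apply_of_notMem hy
        have hfibσ : ∀ x, (univ.filter fun y => f (σ y) = x).card = μ x := by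
          intro x
          rw [← hf x]
          apply Finset.card_bij' (fun y _ => σ y) (fun z _ => σ⁻¹ z)
          · intro y hy
            simp only [mem_filter, mem_univ, true_and] at hy ⊢
            exact hy
          · intro z hz
            simp only [mem_filter, mem_univ, true_and] at hz ⊢
            simpa using hz
          · intro y _; simp
          · intro z _; simp
        have hT0 : 0 ≤ ∑ y, (c y (f (σ y)) - c y (f y)) := by
          have := hopt (fun y => f (σ y)) hfibσ
          rw [Finset.sum_sub_distrib]
          linarith
        have hTsub : ∑ y, (c y (f (σ y)) - c y (f y))
            = ∑ y ∈ ys.toFinset, (c y (f (σ y)) - c y (f y)) := by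
          symm
          apply Finset.sum_subset (subset_univ _)
          intro y _ hy
          rw [hσ_not y (fun h => hy (List.mem_toFinset.mpr h))]
          ring
        have hTlist : ∑ y ∈ ys.toFinset, (c y (f (σ y)) - c y (f y))
            = (ys.map (fun y => c y (f (σ y)) - c y (f y))).sum :=
          List.sum_toFinset _ hysnd
        have hmain : ys.map (fun y => c y (f (σ y)) - c y (f y))
            = zp.map (fun p => a p.1 p.2) := by
          rw [hys, List.map_map]
          apply List.ext_getElem (by simp)
          intro i h1 h2
          simp only [List.length_map, hzplen] at h1 h2
          have hi : i < k := h1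
          have hi1 : (i+1) % k < k := Nat.mod_lt _ hkpos
          simp only [List.getElem_map, Function.comp_apply]
          -- σ (Y zp[i]) = Y zp[(i+1) % k]
          have hform : σ (ys[i]'(by omega)) = ys[(i+1) % ys.length]'(by
              rw [hyslen]; exact hi1) := by
            rw [hσ]
            exact List.formPerm_apply_getElem ys hysnd i (by omega)
          have hysget : ∀ (j : ℕ) (hj : j < k), ys[j]'(by omega) = Y (zp[j]'(by omega)) := by
            intro j hj
            simp [hys]
          have hstep : σ (Y (zp[i]'(by omega))) = Y (zp[(i+1) % k]'(by omega)) := by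
            rw [← hysget i hi, ← hysget ((i+1) % k) hi1]
            rw [hform]
            congr 1
            rw [hyslen]
          rw [hstep]
          have e1 : f (Y (zp[(i+1) % k]'(by omega))) = (zp[(i+1) % k]'(by omega)).1 :=
            hfY _ (List.getElem_mem _)
          have e2 : f (Y (zp[i]'(by omega))) = (zp[i]'(by omega)).1 :=
            hfY _ (List.getElem_mem _)
          rw [e1, e2]
          have e3 : (zp[(i+1) % k]'(by omega)).1 = (zp[i]'(by omega)).2 := by
            rw [hzpfst _ hi1, hzpsnd _ hi]
          rw [e3]
          have hne : (fiber ((zp[i]'(by omega)).1)).Nonempty :=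
            hall _ (hmemzp _ (List.getElem_mem _))
          exact ((hYspec _ hne).2).symm
        have hpwcyc : pw a (l ++ [l.head hl]) = (zp.map (fun p => a p.1 p.2)).sum := by
          obtain ⟨x, t, rfl⟩ : ∃ x t, l = x :: t := by
            cases l with
            | nil => exact absurd rfl hl
            | cons x t => exact ⟨x, t, rfl⟩
          have hrot : (x :: t).rotate 1 = t ++ [x] := by
            rw [List.rotate_cons_succ, List.rotate_zero]
          have hhead : (x :: t).head hl = x := rfl
          rw [pw_zip, hhead]
          congr 1
          rw [hzp, hrot]
          have htl : ((x :: t) ++ [x]).tail = t ++ [x] := by simp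
          have hzap : ((x :: t) ++ [x]).zip ((t ++ [x]) ++ ([] : List C))
              = (x :: t).zip (t ++ [x]) ++ ([x].zip ([] : List C)) :=
            List.zip_append (by simp)
          simp only [List.append_nil, List.zip_nil_right] at hzap
          rw [htl, hzap]
        rw [hpwcyc, ← hmain, ← hTlist, ← hTsub]
        exact hT0
      · push_neg at hall
        obtain ⟨u, hu, hune⟩ := hall
        have hbig := pw_big a A B (fun u => (fiber u).Nonempty) hlb hA0
          (fun u v h => by simp only [ha, if_neg h]) l (l.head hl) ⟨u, hu, Finset.not_nonempty_iff_eq_empty.mpr hune⟩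
        have hlen : (l.length : ℝ) ≤ (n : ℝ) := by exact_mod_cast hnd.length_le_card
        rw [hB] at hbig
        nlinarith
    -- shortest paths
    have hfin : ∀ v : C, {m : List C | m.Nodup ∧ ∃ hm : m ≠ [], m.getLast hm = v}.Finite :=
      fun v => (List.finite_length_le C n).subset (fun m hm => hm.1.length_le_card)
    have hPSmem : ∀ v m, m ∈ (hfin v).toFinset ↔
        (m.Nodup ∧ ∃ hm : m ≠ [], m.getLast hm = v) := fun v m => Set.Finite.mem_toFinset _
    have hPSne : ∀ v, ((hfin v).toFinset).Nonempty := by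
      intro v
      refine ⟨[v], (hPSmem v [v]).mpr ⟨List.nodup_singleton v, List.cons_ne_nil v [], rfl⟩⟩
    set w : C → ℝ := fun v => ((hfin v).toFinset).inf' (hPSne v) (pw a) with hw
    have hwle : ∀ (v : C) (m : List C) (hnd : m.Nodup) (hm : m ≠ []),
        m.getLast hm = v → w v ≤ pw a m := by
      intro v m hnd hm hlast
      exact Finset.inf'_le _ ((hPSmem v m).mpr ⟨hnd, hm, hlast⟩)
    have hkey : ∀ u v, w v ≤ w u + a u v := by
      intro u v
      obtain ⟨m, hmem, hmw⟩ := Finset.exists_mem_eq_inf' (hPSne u) (pw a)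
      obtain ⟨hmnd, hmne, hmlast⟩ := (hPSmem u m).mp hmem
      by_cases hv : v ∈ m
      · obtain ⟨s, t, rfl⟩ := List.append_of_mem hv
        have hs1 : (s ++ [v]).Nodup :=
          hmnd.sublist (List.Sublist.append_left ((List.nil_sublist t).cons₂ v) s)
        have hvt : (v :: t).Nodup := hmnd.sublist (List.sublist_append_right s (v :: t))
        have h1 : w v ≤ pw a (s ++ [v]) := by
          refine hwle v _ hs1 (by simp) ?_
          rw [List.getLast_append_of_ne_nil _ (List.cons_ne_nil v [])]; rfl
        have hcy : 0 ≤ pw a ((v :: t) ++ [v]) := by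
          have := hcyc (v :: t) (List.cons_ne_nil v t) hvt
          simpa using this
        have hsplit : pw a ((s ++ v :: t) ++ [v]) = pw a (s ++ [v]) + pw a ((v :: t) ++ [v]) := by
          rw [List.append_assoc, List.cons_append]
          exact pw_split a s v (t ++ [v])
        have happ : pw a ((s ++ v :: t) ++ [v]) = pw a (s ++ v :: t) + a u v := by
          rw [pw_append_last a _ hmne v, hmlast]
        have hwu : w u = pw a (s ++ v :: t) := hmw
        rw [hwu]
        linarith
      · have hnd2 : (m ++ [v]).Nodup := by
          rw [List.nodup_append']
          refine ⟨hmnd, List.nodup_singleton v, ?_⟩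
          intro x hx hx2
          simp only [List.mem_singleton] at hx2
          exact hv (hx2 ▸ hx)
        have h1 : w v ≤ pw a (m ++ [v]) := by
          refine hwle v _ hnd2 (by simp) ?_
          rw [List.getLast_append_of_ne_nil _ (List.cons_ne_nil v [])]; rfl
        have happ : pw a (m ++ [v]) = pw a m + a u v := by
          rw [pw_append_last a m hmne v, hmlast]
        have hwu : w u = pw a m := hmw
        rw [hwu]
        linarith
    refine ⟨w, fun y x => ?_⟩
    have h1 := hkey (f y) x
    have h2 := hedge y x
    linarith
  · rintro ⟨w, hw⟩ g hg
    have hsum : ∀ (h : P → C), (∀ x, (univ.filter fun y => h y = x).card = μ x) →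
        ∑ y, w (h y) = ∑ x, (μ x : ℝ) * w x := by
      intro h hh
      rw [← Finset.sum_fiberwise_of_maps_to' (g := h) (t := univ) (fun y _ => mem_univ _) w]
      refine Finset.sum_congr rfl fun x _ => ?_
      rw [Finset.sum_const, hh x, nsmul_eq_mul]
    have h1 : ∑ y, (c y (f y) - w (f y)) ≤ ∑ y, (c y (g y) - w (g y)) :=
      Finset.sum_le_sum fun y _ => hw y (g y)
    have h2 := hsum f hf
    have h3 := hsum g hg
    rw [Finset.sum_sub_distrib, Finset.sum_sub_distrib] at h1
    linarith
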